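/- Let 1 < p' < ∞ and let w be a non-negative locally integrable function on (0,∞) with ∫_0^t w(l) dl > 0 for t > 0. Define G(s) = (∫_0^s ((1/t)∫_0^t w(l) dl)^{-p'} w(t) dt)^{1/p'}. Then for all s > 0, G(s)^{p'} ≤ (p'/(p'-1)) ∫_0^s ((1/t)∫_0^t w(l) dl)^{1-p'} dt. -/

import Mathlib

open MeasureTheory Set

section Wlemmas
variable {w : ℝ → ℝ}

lemma W_nonneg (hnn : ∀ t, 0 ≤ w t) (t : ℝ) : 0 ≤ ∫ l in Ioc (0:ℝ) t, w l :=
  setIntegral_nonneg measurableSet_Ioc fun x _ => hnn x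

lemma W_primitive (hsupp : ∀ t ≤ (0:ℝ), w t = 0) (t : ℝ) :
    (∫ l in Ioc (0:ℝ) t, w l) = ∫ l in (0:ℝ)..t, w l := by
  rcases le_or_gt 0 t with h | h
  · rw [intervalIntegral.integral_of_le h]
  · rw [Ioc_eq_empty (by simpa using h.le), intervalIntegral.integral_of_ge h.le]
    have : ∀ l ∈ Ioc t (0:ℝ), w l = 0 := fun l hl => hsupp l hl.2
    rw [setIntegral_congr_fun measurableSet_Ioc this]
    simp

lemma W_continuous (hint : Integrable w) (hsupp : ∀ t ≤ (0:ℝ), w t = 0) :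
    Continuous (fun t => ∫ l in Ioc (0:ℝ) t, w l) := by
  have := intervalIntegral.continuous_primitive (fun a b => hint.intervalIntegrable) 0
  simpa only [← W_primitive hsupp] using this

lemma W_mono (hnn : ∀ t, 0 ≤ w t) (hint : Integrable w) (hsupp : ∀ t ≤ (0:ℝ), w t = 0) :
    Monotone (fun t => ∫ l in Ioc (0:ℝ) t, w l) := by
  intro a b hab
  simp only [W_primitive hsupp]
  have h1 : (∫ l in (0:ℝ)..b, w l) - ∫ l in (0:ℝ)..a, w l = ∫ l in a..b, w l :=
    intervalIntegral.integral_interval_sub_left hint.intervalIntegrable hint.intervalIntegrable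
  have h2 : 0 ≤ ∫ l in a..b, w l :=
    intervalIntegral.integral_nonneg hab (fun x _ => hnn x)
  linarith

lemma W_diff (hint : Integrable w) (hsupp : ∀ t ≤ (0:ℝ), w t = 0) {a b : ℝ} (hab : a ≤ b) :
    (∫ l in Ioc a b, w l) = (∫ l in Ioc (0:ℝ) b, w l) - ∫ l in Ioc (0:ℝ) a, w l := by
  rw [W_primitive hsupp, W_primitive hsupp, ← intervalIntegral.integral_of_le hab]
  rw [intervalIntegral.integral_interval_sub_left hint.intervalIntegrable hint.intervalIntegrable]

end Wlemmas

lemma map_withDensity {w : ℝ → ℝ} (hw : Measurable w) (hnn : ∀ t, 0 ≤ w t)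
    (hint : Integrable w) (hsupp : ∀ t ≤ (0:ℝ), w t = 0) {u s : ℝ} (hus : u ≤ s) :
    Measure.map (fun t => ∫ l in Ioc (0:ℝ) t, w l)
      ((volume.withDensity (fun t => ENNReal.ofReal (w t))).restrict (Ioc u s))
    = volume.restrict (Ioc (∫ l in Ioc (0:ℝ) u, w l) (∫ l in Ioc (0:ℝ) s, w l)) := by
  set W : ℝ → ℝ := fun t => ∫ l in Ioc (0:ℝ) t, w l with hWdef
  have Wcont : Continuous W := W_continuous hint hsupp
  have Wmono : Monotone W := W_mono hnn hint hsupp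
  have mW : Measurable W := Wcont.measurable
  have hdens : ∀ (a b : ℝ), a ≤ b →
      (volume.withDensity (fun t => ENNReal.ofReal (w t))) (Ioc a b)
        = ENNReal.ofReal (W b - W a) := by
    intro a b hab
    rw [withDensity_apply _ measurableSet_Ioc,
      ← ofReal_integral_eq_lintegral_ofReal hint.integrableOn
        ((ae_restrict_iff' measurableSet_Ioc).2 (ae_of_all _ fun x _ => hnn x))]
    rw [show (∫ x in Ioc a b, w x) = W b - W a from W_diff hint hsupp hab]
  haveI : IsFiniteMeasure
      ((volume.withDensity (fun t => ENNReal.ofReal (w t))).restrict (Ioc u s)) := by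
    constructor
    rw [Measure.restrict_apply MeasurableSet.univ, univ_inter, hdens u s hus]
    exact ENNReal.ofReal_lt_top
  refine Measure.ext_of_Iic _ _ (fun x => ?_)
  rw [Measure.map_apply mW measurableSet_Iic, Measure.restrict_apply (mW measurableSet_Iic),
    Measure.restrict_apply measurableSet_Iic]
  rcases lt_or_ge x (W u) with hx | hx
  · have h1 : W ⁻¹' Iic x ∩ Ioc u s = ∅ := by
      ext t
      simp only [mem_inter_iff, mem_preimage, mem_Iic, mem_Ioc, mem_empty_iff_false, iff_false]
      rintro ⟨h1, h2, h3⟩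
      exact absurd (le_trans (Wmono h2.le) h1) (not_le.2 hx)
    have h2 : Iic x ∩ Ioc (W u) (W s) = ∅ := by
      ext y
      simp only [mem_inter_iff, mem_Iic, mem_Ioc, mem_empty_iff_false, iff_false]
      rintro ⟨h1, h2, h3⟩
      exact absurd (le_trans h1 (le_of_lt hx)) (not_le.2 h2)
    have h2' : Iic x ∩ Ioc (∫ l in Ioc (0:ℝ) u, w l) (∫ l in Ioc (0:ℝ) s, w l) = ∅ := h2
    simp [h1, h2, h2']
  · set T := Icc u s ∩ W ⁻¹' Iic x with hT
    have hTu : u ∈ T := ⟨⟨le_refl u, hus⟩, hx⟩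
    have hTbdd : BddAbove T := BddAbove.mono inter_subset_left bddAbove_Icc
    have hTclosed : IsClosed T := isClosed_Icc.inter (isClosed_Iic.preimage Wcont)
    set d := sSup T with hd
    have hdT : d ∈ T := hTclosed.csSup_mem ⟨u, hTu⟩ hTbdd
    obtain ⟨⟨hud, hds⟩, hWd⟩ := hdT
    rw [mem_preimage, mem_Iic] at hWd
    have hset : W ⁻¹' Iic x ∩ Ioc u s = Ioc u d := by
      ext t
      simp only [mem_inter_iff, mem_preimage, mem_Iic, mem_Ioc]
      constructor
      · rintro ⟨h1, h2, h3⟩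
        exact ⟨h2, le_csSup hTbdd ⟨⟨h2.le, h3⟩, h1⟩⟩
      · rintro ⟨h1, h2⟩
        exact ⟨le_trans (Wmono h2) hWd, h1, le_trans h2 hds⟩
    have hWdval : W d = min x (W s) := by
      rcases le_or_gt (W s) x with h | h
      · have hds' : d = s := le_antisymm hds (le_csSup hTbdd ⟨⟨hus, le_refl s⟩, h⟩)
        rw [hds', min_eq_right h]
      · have hds' : d < s := lt_of_le_of_ne hds
          (by intro he; rw [he] at hWd; exact absurd hWd (not_le.2 h))
        have hWdx : W d = x := by
          by_contra hne
          have hlt : W d < x := lt_of_le_of_ne hWd hne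
          have h1 : ∀ᶠ t in nhdsWithin d (Ioi d), W t < x :=
            ((Wcont.tendsto d).mono_left nhdsWithin_le_nhds).eventually_lt_const hlt
          have h2 : ∀ᶠ t in nhdsWithin d (Ioi d), t < s :=
            eventually_nhdsWithin_of_eventually_nhds (eventually_lt_nhds hds')
          have h3 : ∀ᶠ t in nhdsWithin d (Ioi d), t ∈ Ioi d := eventually_mem_nhdsWithin
          obtain ⟨t, ht1, ht2, ht3⟩ := (h1.and (h2.and h3)).exists
          exact absurd (le_csSup hTbdd ⟨⟨hud.trans (le_of_lt ht3), ht2.le⟩, ht1.le⟩)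
            (not_le.2 ht3)
        rw [hWdx, min_eq_left h.le]
    have hIoc : Iic x ∩ Ioc (W u) (W s) = Ioc (W u) (min x (W s)) := by
      ext y
      simp only [mem_inter_iff, mem_Iic, mem_Ioc, mem_inter_iff, le_min_iff]
      constructor
      · rintro ⟨h1, h2, h3⟩; exact ⟨h2, h1, h3⟩
      · rintro ⟨h1, h2, h3⟩; exact ⟨h2, h1, h3⟩
    rw [hset, hIoc, hdens u d hud, Real.volume_Ioc, hWdval]

lemma lint_sub {w : ℝ → ℝ} (hw : Measurable w) (hnn : ∀ t, 0 ≤ w t)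
    (hint : Integrable w) (hsupp : ∀ t ≤ (0:ℝ), w t = 0) {p' : ℝ} (hp' : 1 < p')
    {u s : ℝ} (hus : u ≤ s) (hWu : 0 < ∫ l in Ioc (0:ℝ) u, w l) :
    ∫⁻ t in Ioc u s, ENNReal.ofReal ((∫ l in Ioc (0:ℝ) t, w l) ^ (-p') * w t)
      = ENNReal.ofReal (((∫ l in Ioc (0:ℝ) u, w l) ^ (1-p')
          - (∫ l in Ioc (0:ℝ) s, w l) ^ (1-p')) / (p'-1)) := by
  set W : ℝ → ℝ := fun t => ∫ l in Ioc (0:ℝ) t, w l with hWdef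
  have Wcont : Continuous W := W_continuous hint hsupp
  have Wmono : Monotone W := W_mono hnn hint hsupp
  have mW : Measurable W := Wcont.measurable
  set g : ℝ → ENNReal := fun y => ENNReal.ofReal (y ^ (-p')) with hg
  have mg : Measurable g := (measurable_id.pow measurable_const).ennreal_ofReal
  have hAB : W u ≤ W s := Wmono hus
  have h0m : (0:ℝ) ∉ Set.uIcc (W u) (W s) := by
    rw [uIcc_of_le hAB]
    intro h
    exact absurd hWu (not_lt.2 h.1)
  have hInt : IntegrableOn (fun y => y ^ (-p')) (Ioc (W u) (W s)) :=
    (intervalIntegrable_iff_integrableOn_Ioc_of_le hAB).1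
      (intervalIntegral.intervalIntegrable_rpow (Or.inr h0m))
  calc ∫⁻ t in Ioc u s, ENNReal.ofReal ((W t) ^ (-p') * w t)
      = ∫⁻ t in Ioc u s, ((fun t => ENNReal.ofReal (w t)) * fun t => g (W t)) t := by
        refine lintegral_congr fun t => ?_
        rw [ENNReal.ofReal_mul (Real.rpow_nonneg (W_nonneg hnn t) _), mul_comm]
        rfl
    _ = ∫⁻ t, g (W t) ∂((volume.restrict (Ioc u s)).withDensity fun t => ENNReal.ofReal (w t)) :=
        (lintegral_withDensity_eq_lintegral_mul _ hw.ennreal_ofReal (mg.comp mW)).symm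
    _ = ∫⁻ t, g (W t) ∂((volume.withDensity fun t => ENNReal.ofReal (w t)).restrict (Ioc u s)) := by
        rw [restrict_withDensity measurableSet_Ioc]
    _ = ∫⁻ y, g y ∂(Measure.map W ((volume.withDensity fun t =>
          ENNReal.ofReal (w t)).restrict (Ioc u s))) := (lintegral_map mg mW).symm
    _ = ∫⁻ y in Ioc (W u) (W s), g y := by rw [map_withDensity hw hnn hint hsupp hus]
    _ = ENNReal.ofReal (∫ y in Ioc (W u) (W s), y ^ (-p')) := by
        rw [← ofReal_integral_eq_lintegral_ofReal hInt
          ((ae_restrict_iff' measurableSet_Ioc).2 (ae_of_all _ fun y hy =>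
            Real.rpow_nonneg (le_of_lt (hWu.trans_le hy.1.le)) _))]
    _ = ENNReal.ofReal ((W u ^ (1-p') - W s ^ (1-p')) / (p'-1)) := by
        congr 1
        rw [← intervalIntegral.integral_of_le hAB,
          integral_rpow (Or.inr ⟨fun h => by have := neg_injective h; linarith, h0m⟩)]
        have h1 : (1:ℝ) - p' ≠ 0 := by linarith
        have h2 : p' - 1 ≠ 0 := by linarith
        rw [show -p' + 1 = 1 - p' from by ring]
        field_simp
        ring

lemma lint_pow {p' : ℝ} (hp' : 1 < p') {t : ℝ} (ht : 0 < t) :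
    ∫⁻ u in Ioc (0:ℝ) t, ENNReal.ofReal (p' * u ^ (p'-1)) = ENNReal.ofReal (t ^ p') := by
  have hi : IntegrableOn (fun u => p' * u ^ (p'-1)) (Ioc 0 t) :=
    (intervalIntegrable_iff_integrableOn_Ioc_of_le ht.le).1
      ((intervalIntegral.intervalIntegrable_rpow' (by linarith)).const_mul p')
  rw [← ofReal_integral_eq_lintegral_ofReal hi
    ((ae_restrict_iff' measurableSet_Ioc).2 (ae_of_all _ fun u hu =>
      mul_nonneg (by linarith) (Real.rpow_nonneg hu.1.le _)))]
  congr 1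
  rw [← intervalIntegral.integral_of_le ht.le, intervalIntegral.integral_const_mul,
    integral_rpow (Or.inl (by linarith)), show p' - 1 + 1 = p' from by ring,
    Real.zero_rpow (by linarith : p' ≠ 0)]
  field_simp
  rw [sub_zero]

lemma XE_eq {w : ℝ → ℝ} (hw : Measurable w) (hnn : ∀ t, 0 ≤ w t)
    (hint : Integrable w) (hsupp : ∀ t ≤ (0:ℝ), w t = 0) {p' : ℝ} (hp' : 1 < p')
    {s : ℝ} (hs : 0 < s)
    (hpos : ∀ t, 0 < t → t ≤ s → 0 < ∫ l in Ioc (0:ℝ) t, w l) :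
    ∫⁻ t in Ioc (0:ℝ) s, ENNReal.ofReal (((1/t) * ∫ l in Ioc (0:ℝ) t, w l) ^ (-p') * w t)
      = ∫⁻ u in Ioc (0:ℝ) s, ENNReal.ofReal ((p' * u ^ (p'-1)) *
          (((∫ l in Ioc (0:ℝ) u, w l) ^ (1-p')
            - (∫ l in Ioc (0:ℝ) s, w l) ^ (1-p')) / (p'-1))) := by
  set W : ℝ → ℝ := fun t => ∫ l in Ioc (0:ℝ) t, w l with hWdef
  have Wcont : Continuous W := W_continuous hint hsupp
  have mW : Measurable W := Wcont.measurable
  set c : ℝ → ENNReal := fun u => ENNReal.ofReal (p' * u ^ (p'-1)) with hc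
  set h : ℝ → ENNReal := fun t => ENNReal.ofReal ((W t) ^ (-p') * w t) with hh
  have mc : Measurable c := (measurable_const.mul (measurable_id.pow measurable_const)).ennreal_ofReal
  have mh : Measurable h := ((mW.pow measurable_const).mul hw).ennreal_ofReal
  -- step 1: pointwise rewrite of the integrand
  have step1 : ∫⁻ t in Ioc (0:ℝ) s, ENNReal.ofReal (((1/t) * W t) ^ (-p') * w t)
      = ∫⁻ t in Ioc (0:ℝ) s, ENNReal.ofReal (t ^ p') * h t := by
    refine setLIntegral_congr_fun measurableSet_Ioc (fun t ht => ?_)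
    have ht0 : 0 < t := ht.1
    have e1 : ((1/t) * W t) ^ (-p') = t ^ p' * (W t) ^ (-p') := by
      rw [Real.mul_rpow (by positivity) (W_nonneg hnn t), one_div,
        Real.inv_rpow ht0.le, ← Real.rpow_neg ht0.le, neg_neg]
    rw [e1, mul_assoc, ENNReal.ofReal_mul (Real.rpow_nonneg ht0.le _)]
  -- step 2: express t^p' as inner integral, extend to common domain
  have step2 : ∫⁻ t in Ioc (0:ℝ) s, ENNReal.ofReal (t ^ p') * h t
      = ∫⁻ t in Ioc (0:ℝ) s, ∫⁻ u in Ioc (0:ℝ) s,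
          (Ioc (0:ℝ) t).indicator (fun u => c u * h t) u := by
    refine setLIntegral_congr_fun measurableSet_Ioc (fun t ht => ?_)
    rw [← lint_pow hp' ht.1, ← lintegral_mul_const _ mc,
      lintegral_indicator measurableSet_Ioc, Measure.restrict_restrict measurableSet_Ioc,
      inter_eq_self_of_subset_left (Ioc_subset_Ioc_right ht.2)]
  -- step 3: swap
  have mK : Measurable (Function.uncurry fun (t u : ℝ) =>
      (Ioc (0:ℝ) t).indicator (fun u => c u * h t) u) := by
    have hA : MeasurableSet {q : ℝ × ℝ | q.2 ∈ Ioc 0 q.1} :=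
      (measurableSet_lt measurable_const measurable_snd).inter
        (measurableSet_le measurable_snd measurable_fst)
    have : (Function.uncurry fun (t u : ℝ) => (Ioc (0:ℝ) t).indicator (fun u => c u * h t) u)
        = {q : ℝ × ℝ | q.2 ∈ Ioc 0 q.1}.indicator (fun q => c q.2 * h q.1) := by
      funext q
      simp only [Function.uncurry, Set.indicator_apply, mem_setOf_eq]
    rw [this]
    exact ((mc.comp measurable_snd).mul (mh.comp measurable_fst)).indicator hA
  have step3 : ∫⁻ t in Ioc (0:ℝ) s, ∫⁻ u in Ioc (0:ℝ) s,
        (Ioc (0:ℝ) t).indicator (fun u => c u * h t) u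
      = ∫⁻ u in Ioc (0:ℝ) s, ∫⁻ t in Ioc (0:ℝ) s,
        (Ioc (0:ℝ) t).indicator (fun u => c u * h t) u :=
    lintegral_lintegral_swap mK.aemeasurable
  -- step 4: compute the inner integral for fixed u
  have step4 : ∫⁻ u in Ioc (0:ℝ) s, ∫⁻ t in Ioc (0:ℝ) s,
        (Ioc (0:ℝ) t).indicator (fun u => c u * h t) u
      = ∫⁻ u in Ioc (0:ℝ) s, ENNReal.ofReal ((p' * u ^ (p'-1)) *
          ((W u ^ (1-p') - W s ^ (1-p')) / (p'-1))) := by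
    refine setLIntegral_congr_fun measurableSet_Ioc (fun u hu => ?_)
    have e2 : ∀ t : ℝ, (Ioc (0:ℝ) t).indicator (fun u => c u * h t) u
        = (Ici u).indicator (fun t => c u * h t) t := by
      intro t
      simp only [Set.indicator_apply, mem_Ioc, mem_Ici]
      by_cases hut : u ≤ t
      · simp [hut, hu.1]
      · simp [hut]
    calc ∫⁻ t in Ioc (0:ℝ) s, (Ioc (0:ℝ) t).indicator (fun u => c u * h t) u
        = ∫⁻ t in Ioc (0:ℝ) s, (Ici u).indicator (fun t => c u * h t) t :=
          setLIntegral_congr_fun measurableSet_Ioc (fun t _ => e2 t)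
      _ = ∫⁻ t in Ioc u s, c u * h t := by
          rw [lintegral_indicator measurableSet_Ici,
            Measure.restrict_restrict measurableSet_Ici,
            show Ici u ∩ Ioc (0:ℝ) s = Icc u s from by
              ext y
              simp only [mem_inter_iff, mem_Ici, mem_Ioc, mem_Icc]
              exact ⟨fun ⟨h1, _, h3⟩ => ⟨h1, h3⟩, fun ⟨h1, h2⟩ => ⟨h1, hu.1.trans_le h1, h2⟩⟩,
            ← Measure.restrict_congr_set Ioc_ae_eq_Icc]
      _ = c u * ∫⁻ t in Ioc u s, h t := lintegral_const_mul _ mh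
      _ = c u * ENNReal.ofReal ((W u ^ (1-p') - W s ^ (1-p')) / (p'-1)) := by
          rw [lint_sub hw hnn hint hsupp hp' hu.2 (hpos u hu.1 hu.2)]
      _ = ENNReal.ofReal ((p' * u ^ (p'-1)) * ((W u ^ (1-p') - W s ^ (1-p')) / (p'-1))) := by
          rw [ENNReal.ofReal_mul (mul_nonneg (by linarith) (Real.rpow_nonneg hu.1.le _))]
  rw [step1, step2, step3, step4]

lemma key {w : ℝ → ℝ} (hw : Measurable w) (hnn : ∀ t, 0 ≤ w t)
    (hint : Integrable w) (hsupp : ∀ t ≤ (0:ℝ), w t = 0) {p' : ℝ} (hp' : 1 < p')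
    {s : ℝ} (hs : 0 < s)
    (hpos : ∀ t, 0 < t → t ≤ s → 0 < ∫ l in Ioc (0:ℝ) t, w l) :
    (∫ t in Ioc (0:ℝ) s, ((1/t) * ∫ l in Ioc (0:ℝ) t, w l) ^ (-p') * w t)
      ≤ (p' / (p' - 1)) * ∫ t in Ioc (0:ℝ) s, ((1/t) * ∫ l in Ioc (0:ℝ) t, w l) ^ (1-p') := by
  set W : ℝ → ℝ := fun t => ∫ l in Ioc (0:ℝ) t, w l with hWdef
  have Wcont : Continuous W := W_continuous hint hsupp
  have Wmono : Monotone W := W_mono hnn hint hsupp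
  have mW : Measurable W := Wcont.measurable
  have hp0 : (0:ℝ) < p' - 1 := by linarith
  have hC : (0:ℝ) < p' / (p' - 1) := by positivity
  set fX : ℝ → ℝ := fun t => ((1/t) * W t) ^ (-p') * w t with hfX
  set fY : ℝ → ℝ := fun t => ((1/t) * W t) ^ (1-p') with hfY
  have mbase : Measurable fun t : ℝ => (1/t) * W t :=
    (measurable_const.div measurable_id).mul mW
  have mfX : Measurable fX := ((mbase.pow measurable_const).mul hw)
  have mfY : Measurable fY := mbase.pow measurable_const
  have hfXnn : ∀ t ∈ Ioc (0:ℝ) s, 0 ≤ fX t := fun t ht =>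
    mul_nonneg (Real.rpow_nonneg (mul_nonneg (one_div_nonneg.2 ht.1.le) (W_nonneg hnn t)) _)
      (hnn t)
  have hfYnn : ∀ t ∈ Ioc (0:ℝ) s, 0 ≤ fY t := fun t ht =>
    Real.rpow_nonneg (mul_nonneg (one_div_nonneg.2 ht.1.le) (W_nonneg hnn t)) _
  set XE := ∫⁻ t in Ioc (0:ℝ) s, ENNReal.ofReal (fX t) with hXE
  set YE := ∫⁻ t in Ioc (0:ℝ) s, ENNReal.ofReal (fY t) with hYE
  have hXeq : (∫ t in Ioc (0:ℝ) s, fX t) = XE.toReal :=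
    integral_eq_lintegral_of_nonneg_ae
      ((ae_restrict_iff' measurableSet_Ioc).2 (ae_of_all _ hfXnn))
      mfX.aestronglyMeasurable
  have hYeq : (∫ t in Ioc (0:ℝ) s, fY t) = YE.toReal :=
    integral_eq_lintegral_of_nonneg_ae
      ((ae_restrict_iff' measurableSet_Ioc).2 (ae_of_all _ hfYnn))
      mfY.aestronglyMeasurable
  -- the defect term
  set qd : ℝ → ℝ := fun u => (p' / (p'-1) * W s ^ (1-p')) * u ^ (p'-1) with hqd
  have hqdnn : ∀ u ∈ Ioc (0:ℝ) s, 0 ≤ qd u := fun u hu =>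
    mul_nonneg (mul_nonneg hC.le (Real.rpow_nonneg (W_nonneg hnn s) _))
      (Real.rpow_nonneg hu.1.le _)
  have hqdint : IntegrableOn qd (Ioc 0 s) :=
    (intervalIntegrable_iff_integrableOn_Ioc_of_le hs.le).1
      ((intervalIntegral.intervalIntegrable_rpow' (by linarith)).const_mul _)
  set DE := ∫⁻ u in Ioc (0:ℝ) s, ENNReal.ofReal (qd u) with hDE
  have hDfin : DE ≠ ⊤ := by
    rw [hDE, ← ofReal_integral_eq_lintegral_ofReal hqdint ((ae_restrict_iff' measurableSet_Ioc).2 (ae_of_all _ hqdnn))]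
    exact ENNReal.ofReal_ne_top
  -- main identity : XE + DE = ofReal(p'/(p'-1)) * YE
  have hmain : XE + DE = ENNReal.ofReal (p' / (p'-1)) * YE := by
    have mqd : Measurable fun u => ENNReal.ofReal (qd u) :=
      ((measurable_const.mul (measurable_id.pow measurable_const))).ennreal_ofReal
    have mQx : Measurable fun u : ℝ => ENNReal.ofReal ((p' * u ^ (p'-1)) *
        ((W u ^ (1-p') - W s ^ (1-p')) / (p'-1))) :=
      (((measurable_const.mul (measurable_id.pow measurable_const))).mul
        (((mW.pow measurable_const).sub measurable_const).div_const _)).ennreal_ofReal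
    rw [hXE, hfX, XE_eq hw hnn hint hsupp hp' hs hpos, hDE, ← lintegral_add_right _ mqd]
    have : ∀ u ∈ Ioc (0:ℝ) s,
        ENNReal.ofReal ((p' * u ^ (p'-1)) * ((W u ^ (1-p') - W s ^ (1-p')) / (p'-1))) +
          ENNReal.ofReal (qd u)
        = ENNReal.ofReal (p' / (p'-1)) * ENNReal.ofReal (fY u) := by
      intro u hu
      have hWu : 0 < W u := hpos u hu.1 hu.2
      have hWmono : W s ^ (1-p') ≤ W u ^ (1-p') :=
        Real.rpow_le_rpow_of_nonpos hWu (Wmono hu.2) (by linarith)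
      have e3 : fY u = u ^ (p'-1) * W u ^ (1-p') := by
        show ((1/u) * W u) ^ (1-p') = _
        rw [Real.mul_rpow (one_div_nonneg.2 hu.1.le) (W_nonneg hnn u), one_div,
          Real.inv_rpow hu.1.le, ← Real.rpow_neg hu.1.le, neg_sub]
      rw [← ENNReal.ofReal_add
        (mul_nonneg (mul_nonneg (by linarith) (Real.rpow_nonneg hu.1.le _))
          (div_nonneg (by linarith) hp0.le)) (hqdnn u hu),
        ← ENNReal.ofReal_mul hC.le, e3, hqd]
      congr 1
      field_simp
      ring
    calc ∫⁻ u in Ioc (0:ℝ) s, (ENNReal.ofReal ((p' * u ^ (p'-1)) *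
            ((W u ^ (1-p') - W s ^ (1-p')) / (p'-1))) + ENNReal.ofReal (qd u))
        = ∫⁻ u in Ioc (0:ℝ) s, ENNReal.ofReal (p' / (p'-1)) * ENNReal.ofReal (fY u) :=
          setLIntegral_congr_fun measurableSet_Ioc this
      _ = ENNReal.ofReal (p' / (p'-1)) * YE := by
          rw [hYE, lintegral_const_mul _ mfY.ennreal_ofReal]
  -- conclude
  rw [hXeq, hYeq]
  rcases eq_or_ne YE ⊤ with hYtop | hYtop
  · have hXtop : XE = ⊤ := by
      by_contra hne
      have : XE + DE ≠ ⊤ := ENNReal.add_ne_top.2 ⟨hne, hDfin⟩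
      rw [hmain, hYtop, ENNReal.mul_top (by simpa using ne_of_gt (ENNReal.ofReal_pos.2 hC))] at this
      exact this rfl
    rw [hXtop, hYtop]
    simp
  · have hle : XE ≤ ENNReal.ofReal (p' / (p'-1)) * YE := by
      rw [← hmain]; exact le_self_add
    have hfin : ENNReal.ofReal (p' / (p'-1)) * YE ≠ ⊤ :=
      ENNReal.mul_ne_top ENNReal.ofReal_ne_top hYtop
    calc XE.toReal ≤ (ENNReal.ofReal (p' / (p'-1)) * YE).toReal :=
          ENNReal.toReal_mono hfin hle
      _ = (p' / (p'-1)) * YE.toReal := by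
          rw [ENNReal.toReal_mul, ENNReal.toReal_ofReal hC.le]

/-- Integration-by-parts bound:
`G(s)^{p'} ≤ (p'/(p'-1)) ∫_0^s ((1/t)∫_0^t w)^{1-p'} dt` where
`G(s) = (∫_0^s ((1/t)∫_0^t w)^{-p'} w(t) dt)^{1/p'}`. -/
theorem G_pow_le (p' : ℝ) (hp' : 1 < p') (w : ℝ → ℝ)
    (hnn : ∀ t ∈ Set.Ioi (0:ℝ), 0 ≤ w t)
    (hloc : MeasureTheory.LocallyIntegrableOn w (Set.Ioi 0))
    (hpos : ∀ t : ℝ, 0 < t → 0 < ∫ l in Set.Ioc (0:ℝ) t, w l)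
    (G : ℝ → ℝ)
    (hG : ∀ s : ℝ, G s =
      (∫ t in Set.Ioc (0:ℝ) s,
        ((1 / t) * ∫ l in Set.Ioc (0:ℝ) t, w l) ^ (-p') * w t) ^ (1 / p')) :
    ∀ s : ℝ, 0 < s →
      (G s) ^ p' ≤ (p' / (p' - 1)) *
        ∫ t in Set.Ioc (0:ℝ) s, ((1 / t) * ∫ l in Set.Ioc (0:ℝ) t, w l) ^ (1 - p') := by
  intro s hs
  -- w is integrable on `Ioc 0 t` for each `0 < t` (otherwise its integral would be 0)
  have hIntOn : ∀ t : ℝ, 0 < t → IntegrableOn w (Ioc 0 t) := by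
    intro t ht
    by_contra hni
    have h := hpos t ht
    rw [integral_undef hni] at h
    exact lt_irrefl 0 h
  -- a measurable, nonnegative, globally integrable surrogate for w
  obtain ⟨v, hv, hvw⟩ : ∃ v : ℝ → ℝ, Measurable v ∧ w =ᵐ[volume.restrict (Ioc 0 s)] v :=
    ⟨(hIntOn s hs).aestronglyMeasurable.mk w,
      (hIntOn s hs).aestronglyMeasurable.stronglyMeasurable_mk.measurable,
      (hIntOn s hs).aestronglyMeasurable.ae_eq_mk⟩
  set w₀ : ℝ → ℝ := (Ioc (0:ℝ) s).indicator (fun t => max (v t) 0) with hw₀def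
  have hw₀meas : Measurable w₀ := (hv.max measurable_const).indicator measurableSet_Ioc
  have hw₀nn : ∀ t, 0 ≤ w₀ t := fun t =>
    Set.indicator_nonneg (fun x _ => le_max_right _ _) t
  have hw₀supp : ∀ t ≤ (0:ℝ), w₀ t = 0 := fun t ht =>
    Set.indicator_of_notMem (fun hmem => absurd hmem.1 (not_lt.2 ht)) _
  have hae : w₀ =ᵐ[volume.restrict (Ioc 0 s)] w := by
    filter_upwards [hvw, ae_restrict_mem measurableSet_Ioc] with t h1 h2
    rw [hw₀def, Set.indicator_of_mem h2, ← h1, max_eq_left (hnn t h2.1)]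
  have hw₀int : Integrable w₀ := by
    rw [hw₀def, integrable_indicator_iff measurableSet_Ioc]
    refine (hIntOn s hs).congr ?_
    filter_upwards [hae, ae_restrict_mem measurableSet_Ioc] with t h1 h2
    rw [← h1, hw₀def, Set.indicator_of_mem h2]
  -- the partial integrals of w and w₀ agree on (0, s]
  have hW0 : ∀ t, 0 < t → t ≤ s → (∫ l in Ioc (0:ℝ) t, w₀ l) = ∫ l in Ioc (0:ℝ) t, w l := by
    intro t h1 h2
    refine integral_congr_ae ?_
    exact ae_restrict_of_ae_restrict_of_subset (Ioc_subset_Ioc_right h2) hae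
  have hpos₀ : ∀ t, 0 < t → t ≤ s → 0 < ∫ l in Ioc (0:ℝ) t, w₀ l := fun t h1 h2 => by
    rw [hW0 t h1 h2]; exact hpos t h1
  have hkey := key hw₀meas hw₀nn hw₀int hw₀supp hp' hs hpos₀
  -- transfer both sides from w₀ to w
  have hXtrans : (∫ t in Ioc (0:ℝ) s, ((1/t) * ∫ l in Ioc (0:ℝ) t, w₀ l) ^ (-p') * w₀ t)
      = ∫ t in Ioc (0:ℝ) s, ((1/t) * ∫ l in Ioc (0:ℝ) t, w l) ^ (-p') * w t := by
    refine integral_congr_ae ?_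
    filter_upwards [hae, ae_restrict_mem measurableSet_Ioc] with t h1 h2
    rw [h1, hW0 t h2.1 h2.2]
  have hYtrans : (∫ t in Ioc (0:ℝ) s, ((1/t) * ∫ l in Ioc (0:ℝ) t, w₀ l) ^ (1-p'))
      = ∫ t in Ioc (0:ℝ) s, ((1/t) * ∫ l in Ioc (0:ℝ) t, w l) ^ (1-p') := by
    refine integral_congr_ae ?_
    filter_upwards [ae_restrict_mem measurableSet_Ioc] with t h2
    rw [hW0 t h2.1 h2.2]
  rw [hXtrans, hYtrans] at hkey
  -- identify `G s ^ p'` with the left-hand side integral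
  have hXnn : 0 ≤ ∫ t in Ioc (0:ℝ) s, ((1/t) * ∫ l in Ioc (0:ℝ) t, w l) ^ (-p') * w t := by
    refine setIntegral_nonneg measurableSet_Ioc (fun t ht => ?_)
    refine mul_nonneg (Real.rpow_nonneg ?_ _) (hnn t ht.1)
    exact mul_nonneg (one_div_nonneg.2 ht.1.le)
      (setIntegral_nonneg measurableSet_Ioc (fun l hl => hnn l hl.1))
  have hGs : (G s) ^ p' = ∫ t in Ioc (0:ℝ) s, ((1/t) * ∫ l in Ioc (0:ℝ) t, w l) ^ (-p') * w t := by
    rw [hG s, ← Real.rpow_mul hXnn, one_div, inv_mul_cancel₀ (by linarith : p' ≠ 0),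
      Real.rpow_one]
  rw [hGs]
  convert hkey using 3 <;> rw [one_div]
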